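/- Let $R$ be a commutative ring containing an element $\zeta$ and an invertible element $\varepsilon$, and let $\sigma$ be the ring endomorphism of the Laurent polynomial ring $A = R[\varepsilon^{\pm 1}]$ over $R$ fixing $R$ with $\sigma(\varepsilon) = \zeta\varepsilon$, where $\zeta \in R^\times$. Set $\delta_\sigma := \mathrm{id} - \sigma$ and $D_k := -\varepsilon^k\delta_\sigma$ for $k \in \mathbb{Z}$. Then the hom-Lie bracket satisfies the graded relation $\langle D_k, D_\ell\rangle = (\zeta^\ell - \zeta^k) D_{k+\ell}$ for all $k, \ell \in \mathbb{Z}$. -/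

import Mathlib

open LaurentPolynomial

lemma sigma_T_aux {R : Type*} [CommRing R] (ζ : Rˣ)
    (σ : LaurentPolynomial R →+* LaurentPolynomial R)
    (hT : σ (T 1) = C (ζ : R) * T 1) :
    σ (T (-1)) = C ((ζ⁻¹ : Rˣ) : R) * T (-1) := by
  have key : σ (T 1) * (C ((ζ⁻¹ : Rˣ) : R) * T (-1)) = 1 := by
    rw [hT]
    have : (C (ζ : R) * T 1) * (C ((ζ⁻¹ : Rˣ) : R) * T (-1))
        = (C (ζ : R) * C ((ζ⁻¹ : Rˣ) : R)) * (T 1 * T (-1)) := by ring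
    rw [this, ← map_mul C, ← T_add]
    norm_num
  have h1 : σ (T (-1)) * σ (T 1) = 1 := by
    rw [← map_mul, ← T_add]; norm_num
  calc σ (T (-1)) = σ (T (-1)) * (σ (T 1) * (C ((ζ⁻¹ : Rˣ) : R) * T (-1))) := by
        rw [key, mul_one]
    _ = (σ (T (-1)) * σ (T 1)) * (C ((ζ⁻¹ : Rˣ) : R) * T (-1)) := by ring
    _ = C ((ζ⁻¹ : Rˣ) : R) * T (-1) := by rw [h1, one_mul]

lemma sigma_T {R : Type*} [CommRing R] (ζ : Rˣ)
    (σ : LaurentPolynomial R →+* LaurentPolynomial R)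
    (hT : σ (T 1) = C (ζ : R) * T 1) (n : ℤ) :
    σ (T n) = C ((ζ ^ n : Rˣ) : R) * T n := by
  induction n using Int.induction_on with
  | zero => simp
  | succ n ih =>
      have h : (T ((n : ℤ) + 1) : LaurentPolynomial R) = T (n : ℤ) * T 1 := T_add _ _
      rw [h, map_mul, ih, hT]
      have : ζ ^ ((n : ℤ) + 1) = ζ ^ (n : ℤ) * ζ := zpow_add_one ζ n
      rw [this, Units.val_mul, map_mul C, ← T_add, T_add]
      ring
  | pred n ih =>
      have h : (T (-(n : ℤ) - 1) : LaurentPolynomial R) = T (-(n : ℤ)) * T (-1) := T_sub _ _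
      rw [h, map_mul, ih, sigma_T_aux ζ σ hT]
      have : ζ ^ (-(n : ℤ) - 1) = ζ ^ (-(n : ℤ)) * ζ⁻¹ := zpow_sub_one ζ _
      rw [this, Units.val_mul, map_mul C, ← T_add, T_add]
      ring

/-- For σ the endomorphism of R[ε^{±1}] fixing R with σ(ε) = ζε (ζ a unit),
δ = id - σ and D_k = -ε^k δ, the bracket satisfies
⟨D_k, D_ℓ⟩ = (ζ^ℓ - ζ^k) D_{k+ℓ}, in coefficient form. -/
theorem stmt11 {R : Type*} [CommRing R] (ζ : Rˣ)
    (σ : LaurentPolynomial R →+* LaurentPolynomial R)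
    (hC : ∀ r : R, σ (C r) = C r)
    (hT : σ (T 1) = C (ζ : R) * T 1) (k l : ℤ) :
    σ (-(T k)) * ((-(T l)) - σ (-(T l))) -
      σ (-(T l)) * ((-(T k)) - σ (-(T k))) =
    (C ((ζ ^ l : Rˣ) : R) - C ((ζ ^ k : Rˣ) : R)) * (-(T (k + l))) := by
  rw [map_neg, map_neg, sigma_T ζ σ hT k, sigma_T ζ σ hT l]
  have hkl : (T (k + l) : LaurentPolynomial R) = T k * T l := T_add k l
  rw [hkl]
  ring
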